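/- A CR-statistical submanifold $N$ of a holomorphic statistical manifold $\overline{N}$ is a CR-product (locally a Riemannian product of a holomorphic submanifold and a totally real submanifold) if $\mathcal{A}_{\mathcal{F}Z} X = 0$ and $\mathcal{A}^*_{\mathcal{F}Z} X = 0$ for all $X \in \mathcal{D}$ and $Z \in \mathcal{D}^{\perp}$. -/

import Mathlib

open scoped BigOperators

/- Abstract algebraic model of the geometry of a statistical manifold:
`A` plays the role of the ring of smooth functions on the manifold `N̄`,
`V` plays the role of the module of vector fields `Γ(TN̄)`.  -/

variable (A : Type) [CommRing A] [Algebra ℝ A]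
variable (V : Type) [AddCommGroup V] [Module A V] [Module ℝ V] [IsScalarTower ℝ A V]

/-- The basic context: a (pseudo-Riemannian) metric `g`, the action `D` of vector
fields on functions as derivations, and the Lie bracket of vector fields. -/
structure StatContext where
  g : V →ₗ[A] V →ₗ[A] A
  g_symm : ∀ X Y : V, g X Y = g Y X
  g_nondeg : ∀ X : V, (∀ Y : V, g X Y = 0) → X = 0
  D : V → Derivation ℝ A A
  bracket : V → V → V

variable {A V}

/-- An affine connection. -/
structure AffConn (ctx : StatContext A V) where
  op : V → V → V
  add_left : ∀ X Y Z : V, op (X + Y) Z = op X Z + op Y Z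
  smul_left : ∀ (f : A) (X Y : V), op (f • X) Y = f • op X Y
  add_right : ∀ X Y Z : V, op X (Y + Z) = op X Y + op X Z
  leibniz : ∀ (X : V) (f : A) (Y : V), op X (f • Y) = ctx.D X f • Y + f • op X Y

/-- Torsion-freeness of a connection. -/
def IsTorsionFree (ctx : StatContext A V) (C : AffConn ctx) : Prop :=
  ∀ X Y : V, C.op X Y - C.op Y X = ctx.bracket X Y

/-- `(∇_X g)(Y, Z)`. -/
def nablaG (ctx : StatContext A V) (C : AffConn ctx) (X Y Z : V) : A :=
  ctx.D X (ctx.g Y Z) - ctx.g (C.op X Y) Z - ctx.g Y (C.op X Z)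

/-- `(∇, g)` is a statistical structure: `∇` is torsion-free and `∇g` is symmetric. -/
def IsStatistical (ctx : StatContext A V) (C : AffConn ctx) : Prop :=
  IsTorsionFree ctx C ∧ ∀ X Y Z : V, nablaG ctx C X Y Z = nablaG ctx C Y X Z

/-- `∇*` is the dual connection of `∇` with respect to `g`:
`X g(Y,Z) = g(∇_X Y, Z) + g(Y, ∇*_X Z)`. -/
def IsDual (ctx : StatContext A V) (C Cs : AffConn ctx) : Prop :=
  ∀ X Y Z : V, ctx.D X (ctx.g Y Z) = ctx.g (C.op X Y) Z + ctx.g Y (Cs.op X Z)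
/-- A holomorphic statistical manifold: a Kaehler manifold `(N̄, g, J)` (with
Levi-Civita connection `LC`) together with a statistical structure `(∇, g)` with
dual connection `∇*` such that the Kaehler form `ω(X,Y) = g(X, JY)` is `∇`-parallel. -/
structure HolStatMan (ctx : StatContext A V) where
  C : AffConn ctx
  Cs : AffConn ctx
  J : V →ₗ[A] V
  statC : IsStatistical ctx C
  dual : IsDual ctx C Cs
  Jsq : ∀ X : V, J (J X) = -X
  Jiso : ∀ X Y : V, ctx.g (J X) (J Y) = ctx.g X Y
  LC : AffConn ctx
  LC_tf : IsTorsionFree ctx LC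
  LC_metric : ∀ X Y Z : V, ctx.D X (ctx.g Y Z) = ctx.g (LC.op X Y) Z + ctx.g Y (LC.op X Z)
  LC_J : ∀ X Y : V, LC.op X (J Y) = J (LC.op X Y)
  omega_par : ∀ X Y Z : V,
    ctx.D X (ctx.g Y (J Z)) = ctx.g (C.op X Y) (J Z) + ctx.g Y (J (C.op X Z))

/-- A statistical submanifold `N` of a holomorphic statistical manifold, encoded by the
submodule `T` of tangent vector fields, the submodule `Nor` of normal vector fields,
the induced dual connections `nab, nabS`, the imbedding curvature tensors (second
fundamental forms) `B, Bs`, the shape operators `Aop, AopS`, the normal connections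
`perp, perpS` (Gauss and Weingarten formulas), and the decompositions
`J X = P X + F X` (tangent `X`) and `J U = t' U + f' U` (normal `U`). -/
structure StatSub (ctx : StatContext A V) (M : HolStatMan ctx) where
  T : Submodule A V
  Nor : Submodule A V
  compl : IsCompl T Nor
  orth : ∀ X ∈ T, ∀ U ∈ Nor, ctx.g X U = 0
  bracket_mem : ∀ X ∈ T, ∀ Y ∈ T, ctx.bracket X Y ∈ T
  nab : V → V → V
  nabS : V → V → V
  B : V → V → V
  Bs : V → V → V
  Aop : V → V → V
  AopS : V → V → V
  perp : V → V → V
  perpS : V → V → V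
  nab_mem : ∀ X ∈ T, ∀ Y ∈ T, nab X Y ∈ T
  nabS_mem : ∀ X ∈ T, ∀ Y ∈ T, nabS X Y ∈ T
  B_mem : ∀ X ∈ T, ∀ Y ∈ T, B X Y ∈ Nor
  Bs_mem : ∀ X ∈ T, ∀ Y ∈ T, Bs X Y ∈ Nor
  B_symm : ∀ X ∈ T, ∀ Y ∈ T, B X Y = B Y X
  Bs_symm : ∀ X ∈ T, ∀ Y ∈ T, Bs X Y = Bs Y X
  A_mem : ∀ U ∈ Nor, ∀ X ∈ T, Aop U X ∈ T
  As_mem : ∀ U ∈ Nor, ∀ X ∈ T, AopS U X ∈ T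
  perp_mem : ∀ X ∈ T, ∀ U ∈ Nor, perp X U ∈ Nor
  perpS_mem : ∀ X ∈ T, ∀ U ∈ Nor, perpS X U ∈ Nor
  gauss : ∀ X ∈ T, ∀ Y ∈ T, M.C.op X Y = nab X Y + B X Y
  gaussS : ∀ X ∈ T, ∀ Y ∈ T, M.Cs.op X Y = nabS X Y + Bs X Y
  wein : ∀ X ∈ T, ∀ U ∈ Nor, M.C.op X U = - Aop U X + perp X U
  weinS : ∀ X ∈ T, ∀ U ∈ Nor, M.Cs.op X U = - AopS U X + perpS X U
  P : V → V
  F : V → V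
  t' : V → V
  f' : V → V
  PF_dec : ∀ X ∈ T, M.J X = P X + F X
  P_mem : ∀ X ∈ T, P X ∈ T
  F_mem : ∀ X ∈ T, F X ∈ Nor
  tf_dec : ∀ U ∈ Nor, M.J U = t' U + f' U
  t_mem : ∀ U ∈ Nor, t' U ∈ T
  f_mem : ∀ U ∈ Nor, f' U ∈ Nor

/-- A CR-statistical submanifold: the tangent bundle splits orthogonally as
`𝒟 ⊕ 𝒟⊥` with `𝒟` holomorphic (`J𝒟 = 𝒟`) and `𝒟⊥` totally real (`J𝒟⊥ ⊆ T⊥N`). -/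
structure CRSub (ctx : StatContext A V) (M : HolStatMan ctx) (S : StatSub ctx M) where
  Dd : Submodule A V
  Dp : Submodule A V
  Dd_le : Dd ≤ S.T
  Dp_le : Dp ≤ S.T
  orthD : ∀ X ∈ Dd, ∀ Z ∈ Dp, ctx.g X Z = 0
  spanD : Dd ⊔ Dp = S.T
  J_Dd : ∀ X ∈ Dd, M.J X ∈ Dd
  J_Dp : ∀ Z ∈ Dp, M.J Z ∈ S.Nor

/-- `N` is a CR-product: locally a Riemannian product of a holomorphic submanifold
(an integral manifold of `𝒟`) and a totally real submanifold (an integral manifold of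
`𝒟⊥`).  By the de Rham-type decomposition this is encoded by both distributions being
parallel in `N` with respect to both induced dual connections (equivalently, all leaves
of `𝒟` and `𝒟⊥` are totally geodesic in `N` for `∇` and `∇*`). -/
def IsCRProduct (ctx : StatContext A V) (M : HolStatMan ctx)
    (S : StatSub ctx M) (cr : CRSub ctx M S) : Prop :=
  (∀ X ∈ S.T, ∀ Y ∈ cr.Dd, S.nab X Y ∈ cr.Dd ∧ S.nabS X Y ∈ cr.Dd) ∧
  (∀ X ∈ S.T, ∀ Z ∈ cr.Dp, S.nab X Z ∈ cr.Dp ∧ S.nabS X Z ∈ cr.Dp)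

section CRHelpers

variable (ctx : StatContext A V)

lemma AffConn.op_zero (C : AffConn ctx) (X : V) : C.op X 0 = 0 := by
  have h := C.add_right X 0 0
  rw [add_zero] at h
  exact right_eq_add.mp h

lemma AffConn.op_neg (C : AffConn ctx) (X Z : V) : C.op X (-Z) = -C.op X Z := by
  have h := C.add_right X Z (-Z)
  rw [add_neg_cancel, C.op_zero] at h
  exact eq_neg_of_add_eq_zero_left (by rw [add_comm]; exact h.symm)

variable (M : HolStatMan ctx)

/-- Key Kähler-type identity: `∇̄*_X (J W) = J (∇̄_X W)`. -/
lemma hol_K1 (X W : V) : M.Cs.op X (M.J W) = M.J (M.C.op X W) := by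
  have key : ∀ Y : V, ctx.g (M.Cs.op X (M.J W) - M.J (M.C.op X W)) Y = 0 := by
    intro Y
    have hd := M.dual X Y (M.J W)
    have ho := M.omega_par X Y W
    have h2 : ctx.g Y (M.Cs.op X (M.J W)) = ctx.g Y (M.J (M.C.op X W)) :=
      add_left_cancel (hd.symm.trans ho)
    rw [ctx.g_symm]
    simp only [map_sub]
    rw [h2, sub_self]
  exact sub_eq_zero.mp (ctx.g_nondeg _ key)

/-- Dual key identity: `∇̄_X (J Z) = J (∇̄*_X Z)`. -/
lemma hol_K2 (X Z : V) : M.C.op X (M.J Z) = M.J (M.Cs.op X Z) := by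
  have h := hol_K1 ctx M X (M.J Z)
  rw [M.Jsq, M.Cs.op_neg] at h
  have h2 := congrArg M.J h
  rw [map_neg, M.Jsq] at h2
  exact (neg_injective h2).symm

variable (S : StatSub ctx M)

/-- `g(Y, A*_U X) = g(B(X,Y), U)`. -/
lemma shapeS_rel (X Y U : V) (hX : X ∈ S.T) (hY : Y ∈ S.T) (hU : U ∈ S.Nor) :
    ctx.g Y (S.AopS U X) = ctx.g (S.B X Y) U := by
  have h0 : ctx.g Y U = 0 := S.orth Y hY U hU
  have hd := M.dual X Y U
  rw [h0, map_zero, S.gauss X hX Y hY, S.weinS X hX U hU] at hd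
  simp only [map_add, map_neg, LinearMap.add_apply, LinearMap.neg_apply] at hd
  have h1 : ctx.g (S.nab X Y) U = 0 := S.orth _ (S.nab_mem X hX Y hY) U hU
  have h2 : ctx.g Y (S.perpS X U) = 0 := S.orth Y hY _ (S.perpS_mem X hX U hU)
  rw [h1, h2] at hd
  linear_combination hd

/-- `g(Y, A_U X) = g(B*(X,Y), U)`. -/
lemma shape_rel (X Y U : V) (hX : X ∈ S.T) (hY : Y ∈ S.T) (hU : U ∈ S.Nor) :
    ctx.g Y (S.Aop U X) = ctx.g (S.Bs X Y) U := by
  have h0 : ctx.g U Y = 0 := by rw [ctx.g_symm]; exact S.orth Y hY U hU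
  have hd := M.dual X U Y
  rw [h0, map_zero, S.gaussS X hX Y hY, S.wein X hX U hU] at hd
  simp only [map_add, map_neg, LinearMap.add_apply, LinearMap.neg_apply] at hd
  have h1 : ctx.g U (S.nabS X Y) = 0 := by
    rw [ctx.g_symm]; exact S.orth _ (S.nabS_mem X hX Y hY) U hU
  have h2 : ctx.g (S.perp X U) Y = 0 := by
    rw [ctx.g_symm]; exact S.orth Y hY _ (S.perp_mem X hX U hU)
  rw [h1, h2] at hd
  have : ctx.g (S.Aop U X) Y = ctx.g U (S.Bs X Y) := by linear_combination hd
  rw [ctx.g_symm Y, this, ctx.g_symm]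

variable (cr : CRSub ctx M S)

/-- For `Z ∈ 𝒟⊥`, `F Z = J Z`. -/
lemma F_eq_J (Z : V) (hZ : Z ∈ cr.Dp) : S.F Z = M.J Z := by
  have hZT : Z ∈ S.T := cr.Dp_le hZ
  have hdec := S.PF_dec Z hZT
  have hP : S.P Z ∈ S.T := S.P_mem Z hZT
  have hPn : S.P Z ∈ S.Nor := by
    have : S.P Z = M.J Z - S.F Z := by rw [hdec]; abel
    rw [this]
    exact Submodule.sub_mem _ (cr.J_Dp Z hZ) (S.F_mem Z hZT)
  have hP0 : S.P Z = 0 := Submodule.disjoint_def.mp S.compl.disjoint _ hP hPn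
  rw [hP0, zero_add] at hdec
  exact hdec.symm

/-- A tangent vector orthogonal to `𝒟⊥` lies in `𝒟`. -/
lemma mem_Dd_of_orth (W : V) (hW : W ∈ S.T) (h : ∀ Z ∈ cr.Dp, ctx.g W Z = 0) :
    W ∈ cr.Dd := by
  rw [← cr.spanD] at hW
  obtain ⟨a, ha, b, hb, rfl⟩ := Submodule.mem_sup.mp hW
  have hb0 : ∀ Z ∈ cr.Dp, ctx.g b Z = 0 := by
    intro Z hZ
    have := h Z hZ
    simp only [map_add, LinearMap.add_apply] at this
    rwa [cr.orthD a ha Z hZ, zero_add] at this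
  have : b = 0 := by
    apply ctx.g_nondeg
    intro Y
    have hYtop : Y ∈ S.T ⊔ S.Nor := by
      rw [S.compl.sup_eq_top]; trivial
    obtain ⟨t, ht, n, hn, rfl⟩ := Submodule.mem_sup.mp hYtop
    rw [← cr.spanD] at ht
    obtain ⟨td, htd, tp, htp, rfl⟩ := Submodule.mem_sup.mp ht
    simp only [map_add]
    rw [ctx.g_symm b td, cr.orthD td htd b hb, hb0 tp htp,
      S.orth b (cr.Dp_le hb) n hn]
    ring
  rw [this, add_zero]
  exact ha

/-- A tangent vector orthogonal to `𝒟` lies in `𝒟⊥`. -/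
lemma mem_Dp_of_orth (W : V) (hW : W ∈ S.T) (h : ∀ Y ∈ cr.Dd, ctx.g W Y = 0) :
    W ∈ cr.Dp := by
  rw [← cr.spanD] at hW
  obtain ⟨a, ha, b, hb, rfl⟩ := Submodule.mem_sup.mp hW
  have ha0 : ∀ Y ∈ cr.Dd, ctx.g a Y = 0 := by
    intro Y hY
    have := h Y hY
    simp only [map_add, LinearMap.add_apply] at this
    rwa [ctx.g_symm b Y, cr.orthD Y hY b hb, add_zero] at this
  have : a = 0 := by
    apply ctx.g_nondeg
    intro Y
    have hYtop : Y ∈ S.T ⊔ S.Nor := by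
      rw [S.compl.sup_eq_top]; trivial
    obtain ⟨t, ht, n, hn, rfl⟩ := Submodule.mem_sup.mp hYtop
    rw [← cr.spanD] at ht
    obtain ⟨td, htd, tp, htp, rfl⟩ := Submodule.mem_sup.mp ht
    simp only [map_add]
    rw [ha0 td htd, cr.orthD a ha tp htp, S.orth a (cr.Dd_le ha) n hn]
    ring
  rw [this, zero_add]
  exact hb

/-- `g(∇̄_X Z, Y) = 0` for `X ∈ TN`, `Z ∈ 𝒟⊥`, `Y ∈ 𝒟`. -/
lemma gC_zero (hAs : ∀ Z ∈ cr.Dp, ∀ X ∈ cr.Dd, S.AopS (S.F Z) X = 0)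
    (X Z Y : V) (hX : X ∈ S.T) (hZ : Z ∈ cr.Dp) (hY : Y ∈ cr.Dd) :
    ctx.g (M.C.op X Z) Y = 0 := by
  have hJY : M.J Y ∈ cr.Dd := cr.J_Dd Y hY
  have hJYT : M.J Y ∈ S.T := cr.Dd_le hJY
  have hFZ : S.F Z ∈ S.Nor := S.F_mem Z (cr.Dp_le hZ)
  have h1 : ctx.g (M.C.op X Z) Y = ctx.g (M.Cs.op X (S.F Z)) (M.J Y) := by
    rw [F_eq_J ctx M S cr Z hZ, hol_K1, M.Jiso]
  rw [h1, S.weinS X hX (S.F Z) hFZ]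
  simp only [map_add, map_neg, LinearMap.add_apply, LinearMap.neg_apply]
  have h2 : ctx.g (S.perpS X (S.F Z)) (M.J Y) = 0 := by
    rw [ctx.g_symm]; exact S.orth _ hJYT _ (S.perpS_mem X hX (S.F Z) hFZ)
  have h3 : ctx.g (S.AopS (S.F Z) X) (M.J Y) = 0 := by
    rw [ctx.g_symm, shapeS_rel ctx M S X (M.J Y) (S.F Z) hX hJYT hFZ,
      S.B_symm X hX (M.J Y) hJYT,
      ← shapeS_rel ctx M S (M.J Y) X (S.F Z) hJYT hX hFZ,
      hAs Z hZ (M.J Y) hJY, map_zero]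
  rw [h2, h3]
  ring

/-- `g(∇̄*_X Z, Y) = 0` for `X ∈ TN`, `Z ∈ 𝒟⊥`, `Y ∈ 𝒟`. -/
lemma gCs_zero (hA : ∀ Z ∈ cr.Dp, ∀ X ∈ cr.Dd, S.Aop (S.F Z) X = 0)
    (X Z Y : V) (hX : X ∈ S.T) (hZ : Z ∈ cr.Dp) (hY : Y ∈ cr.Dd) :
    ctx.g (M.Cs.op X Z) Y = 0 := by
  have hJY : M.J Y ∈ cr.Dd := cr.J_Dd Y hY
  have hJYT : M.J Y ∈ S.T := cr.Dd_le hJY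
  have hFZ : S.F Z ∈ S.Nor := S.F_mem Z (cr.Dp_le hZ)
  have h1 : ctx.g (M.Cs.op X Z) Y = ctx.g (M.C.op X (S.F Z)) (M.J Y) := by
    rw [F_eq_J ctx M S cr Z hZ, hol_K2, M.Jiso]
  rw [h1, S.wein X hX (S.F Z) hFZ]
  simp only [map_add, map_neg, LinearMap.add_apply, LinearMap.neg_apply]
  have h2 : ctx.g (S.perp X (S.F Z)) (M.J Y) = 0 := by
    rw [ctx.g_symm]; exact S.orth _ hJYT _ (S.perp_mem X hX (S.F Z) hFZ)
  have h3 : ctx.g (S.Aop (S.F Z) X) (M.J Y) = 0 := by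
    rw [ctx.g_symm, shape_rel ctx M S X (M.J Y) (S.F Z) hX hJYT hFZ,
      S.Bs_symm X hX (M.J Y) hJYT,
      ← shape_rel ctx M S (M.J Y) X (S.F Z) hJYT hX hFZ,
      hA Z hZ (M.J Y) hJY, map_zero]
  rw [h2, h3]
  ring

end CRHelpers

/-- A CR-statistical submanifold is a CR-product if
`A_{F𝒟⊥} 𝒟 = 0` and `A*_{F𝒟⊥} 𝒟 = 0`. -/
theorem CR_product_criterion
    (ctx : StatContext A V) (M : HolStatMan ctx) (S : StatSub ctx M) (cr : CRSub ctx M S)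
    (hA : ∀ Z ∈ cr.Dp, ∀ X ∈ cr.Dd, S.Aop (S.F Z) X = 0)
    (hAs : ∀ Z ∈ cr.Dp, ∀ X ∈ cr.Dd, S.AopS (S.F Z) X = 0) :
    IsCRProduct ctx M S cr := by
  constructor
  · intro X hX Y hY
    have hYT : Y ∈ S.T := cr.Dd_le hY
    refine ⟨mem_Dd_of_orth ctx M S cr _ (S.nab_mem X hX Y hYT) ?_,
            mem_Dd_of_orth ctx M S cr _ (S.nabS_mem X hX Y hYT) ?_⟩
    · intro Z hZ
      have hd := M.dual X Y Z
      rw [cr.orthD Y hY Z hZ, map_zero] at hd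
      have hCs : ctx.g Y (M.Cs.op X Z) = 0 := by
        rw [ctx.g_symm]; exact gCs_zero ctx M S cr hA X Z Y hX hZ hY
      rw [hCs, add_zero, S.gauss X hX Y hYT] at hd
      simp only [map_add, LinearMap.add_apply] at hd
      have hB : ctx.g (S.B X Y) Z = 0 := by
        rw [ctx.g_symm]; exact S.orth Z (cr.Dp_le hZ) _ (S.B_mem X hX Y hYT)
      rw [hB, add_zero] at hd
      exact hd.symm
    · intro Z hZ
      have hd := M.dual X Z Y
      have h0 : ctx.g Z Y = 0 := by rw [ctx.g_symm]; exact cr.orthD Y hY Z hZ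
      rw [h0, map_zero, gC_zero ctx M S cr hAs X Z Y hX hZ hY, zero_add,
        S.gaussS X hX Y hYT] at hd
      simp only [map_add] at hd
      have hB : ctx.g Z (S.Bs X Y) = 0 :=
        S.orth Z (cr.Dp_le hZ) _ (S.Bs_mem X hX Y hYT)
      rw [hB, add_zero] at hd
      rw [ctx.g_symm]
      exact hd.symm
  · intro X hX Z hZ
    have hZT : Z ∈ S.T := cr.Dp_le hZ
    refine ⟨mem_Dp_of_orth ctx M S cr _ (S.nab_mem X hX Z hZT) ?_,
            mem_Dp_of_orth ctx M S cr _ (S.nabS_mem X hX Z hZT) ?_⟩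
    · intro Y hY
      have hC := gC_zero ctx M S cr hAs X Z Y hX hZ hY
      rw [S.gauss X hX Z hZT] at hC
      simp only [map_add, LinearMap.add_apply] at hC
      have hB : ctx.g (S.B X Z) Y = 0 := by
        rw [ctx.g_symm]; exact S.orth Y (cr.Dd_le hY) _ (S.B_mem X hX Z hZT)
      rwa [hB, add_zero] at hC
    · intro Y hY
      have hC := gCs_zero ctx M S cr hA X Z Y hX hZ hY
      rw [S.gaussS X hX Z hZT] at hC
      simp only [map_add, LinearMap.add_apply] at hC
      have hB : ctx.g (S.Bs X Z) Y = 0 := by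
        rw [ctx.g_symm]; exact S.orth Y (cr.Dd_le hY) _ (S.Bs_mem X hX Z hZT)
      rwa [hB, add_zero] at hC
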